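/- arXiv:2407.21261 — 8 statements merged into one kernel-verified Lean document; each statement's English description precedes it below -/
import Mathlib

section
/- Let x, y ∈ l_p (1 < p < ∞) with ⟨J(x), y⟩ ≠ 0. Then 0 ∉ D̂*J(x)(y); equivalently, limsup_{z→x} (−⟨J(z) − J(x), y⟩)/(‖z − x‖_p + ‖J(z) − J(x)‖_q) > 0. In fact this limsup is at least |⟨J(x), y⟩|/(2‖x‖_p). -/
open scoped ENNReal Topology

/-- for `x, y ∈ ℓᵖ` (`1 < p < ∞`) with `⟨J x, y⟩ ≠ 0`, where `J : ℓᵖ → ℓ^q`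
is the normalized duality mapping, the limsup as `z → x` of
`(-⟨J z - J x, y⟩)/(‖z-x‖ + ‖J z - J x‖)` is at least `|⟨J x, y⟩|/(2‖x‖) > 0`;
consequently `0 ∉ D̂*J(x)(y)`. -/
theorem zero_not_mem_coderivative_duality_map_lp (p q : ℝ) (hp : 1 < p) (hq : 1 < q)
    (hpq : 1 / p + 1 / q = 1)
    [Fact (1 ≤ ENNReal.ofReal p)] [Fact (1 ≤ ENNReal.ofReal q)]
    (J : lp (fun _ : ℕ => ℝ) (ENNReal.ofReal p) → lp (fun _ : ℕ => ℝ) (ENNReal.ofReal q))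
    (hJ : ∀ z, ∀ n : ℕ, J z n = |z n| ^ (p - 2) * z n / ‖z‖ ^ (p - 2))
    (x y : lp (fun _ : ℕ => ℝ) (ENNReal.ofReal p))
    (hxy : (∑' n : ℕ, J x n * y n) ≠ 0) :
    |∑' n : ℕ, J x n * y n| / (2 * ‖x‖) ≤
      Filter.limsup
        (fun z => (-(∑' n : ℕ, (J z n - J x n) * y n)) /
          (‖z - x‖ + ‖J z - J x‖)) (𝓝[≠] x) ∧
    (0 : lp (fun _ : ℕ => ℝ) (ENNReal.ofReal q)) ∉
      {w : lp (fun _ : ℕ => ℝ) (ENNReal.ofReal q) |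
        Filter.limsup
          (fun z => ((∑' n : ℕ, w n * (z n - x n)) - ∑' n : ℕ, (J z n - J x n) * y n) /
            (‖z - x‖ + ‖J z - J x‖)) (𝓝[≠] x) ≤ 0} := by
  have hp0 : (0:ℝ) < p := lt_trans one_pos hp
  have hq0 : (0:ℝ) < q := lt_trans one_pos hq
  have hpne : p ≠ 0 := hp0.ne'
  have hqne : q ≠ 0 := hq0.ne'
  have hPt : (ENNReal.ofReal p).toReal = p := ENNReal.toReal_ofReal hp0.le
  have hQt : (ENNReal.ofReal q).toReal = q := ENNReal.toReal_ofReal hq0.le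
  have hpq' : p * q = p + q := by
    field_simp at hpq; linarith
  -- `x ≠ 0`
  have hx0 : x ≠ 0 := by
    intro h
    apply hxy
    have h1 : ∀ n : ℕ, J x n * y n = 0 := by
      intro n
      rw [hJ x n, h]
      simp
    simp only [h1, tsum_zero]
  have hnx : (0:ℝ) < ‖x‖ := norm_pos_iff.mpr hx0
  -- `‖J x‖ = ‖x‖`
  have hJxnorm : ‖J x‖ = ‖x‖ := by
    have hcoord : ∀ n : ℕ, ‖J x n‖ ^ q = ‖x n‖ ^ p * (‖x‖ ^ ((p-2)*q))⁻¹ := by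
      intro n
      rw [hJ x n]
      rcases eq_or_ne (x n) 0 with h | h
      · rw [h]
        simp [Real.zero_rpow hqne, Real.zero_rpow hpne]
      · have hxa : (0:ℝ) < |x n| := abs_pos.mpr h
        simp only [Real.norm_eq_abs]
        rw [abs_div, abs_mul, abs_of_pos (Real.rpow_pos_of_pos hxa _),
          abs_of_pos (Real.rpow_pos_of_pos hnx _),
          ← Real.rpow_add_one hxa.ne',
          Real.div_rpow (Real.rpow_nonneg (abs_nonneg _) _) (Real.rpow_nonneg (norm_nonneg _) _),
          ← Real.rpow_mul (abs_nonneg _), ← Real.rpow_mul (norm_nonneg _),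
          show (p - 2 + 1) * q = p from by linear_combination hpq', div_eq_mul_inv]
    have hsum : HasSum (fun n : ℕ => ‖J x n‖ ^ q) (‖x‖ ^ p * (‖x‖ ^ ((p-2)*q))⁻¹) := by
      have h := (lp.hasSum_norm (p := ENNReal.ofReal p) (by rw [hPt]; exact hp0) x).mul_right
        (‖x‖ ^ ((p-2)*q))⁻¹
      rw [hPt] at h
      exact (funext hcoord : (fun n : ℕ => ‖J x n‖ ^ q) = _) ▸ h
    rw [lp.norm_eq_tsum_rpow (by rw [hQt]; exact hq0)]
    simp only [hQt]
    rw [hsum.tsum_eq]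
    have h2 : ‖x‖ ^ p * (‖x‖ ^ ((p-2)*q))⁻¹ = ‖x‖ ^ q := by
      rw [← div_eq_mul_inv, ← Real.rpow_sub hnx]
      congr 1
      linear_combination -hpq'
    rw [h2, ← Real.rpow_mul (norm_nonneg x), mul_one_div, div_self hqne, Real.rpow_one]
  -- scaling: `J (t • x) = t • J x` for `t > 0`
  have hsmul : ∀ t : ℝ, 0 < t → J (t • x) = t • J x := by
    intro t ht
    apply lp.ext
    funext n
    have hxn : (t • x : lp (fun _ : ℕ => ℝ) (ENNReal.ofReal p)) n = t * x n := by
      rw [lp.coeFn_smul]; rfl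
    have htx : ‖t • x‖ = t * ‖x‖ := by
      rw [norm_smul, Real.norm_eq_abs, abs_of_pos ht]
    have h1 : ((t • J x : lp (fun _ : ℕ => ℝ) (ENNReal.ofReal q)) : ℕ → ℝ) n = t * J x n := by
      rw [lp.coeFn_smul]; rfl
    show (J (t • x)) n = _
    rw [h1, hJ, hJ, hxn, htx, abs_mul, abs_of_pos ht,
      Real.mul_rpow ht.le (abs_nonneg _), Real.mul_rpow ht.le (norm_nonneg _)]
    have h2 : t ^ (p-2) ≠ 0 := (Real.rpow_pos_of_pos ht _).ne'
    have h3 : ‖x‖ ^ (p-2) ≠ 0 := (Real.rpow_pos_of_pos hnx _).ne'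
    field_simp
  set S := ∑' n : ℕ, J x n * y n with hSdef
  set f : lp (fun _ : ℕ => ℝ) (ENNReal.ofReal p) → ℝ :=
    fun z => (-(∑' n : ℕ, (J z n - J x n) * y n)) / (‖z - x‖ + ‖J z - J x‖) with hf
  -- value along the curve t • x
  have hval : ∀ t : ℝ, 0 < t →
      f (t • x) = (-((t - 1) * S)) / (|t - 1| * (2 * ‖x‖)) := by
    intro t ht
    have hnum : (∑' n : ℕ, (J (t • x) n - J x n) * y n) = (t - 1) * S := by
      rw [hSdef, ← tsum_mul_left]
      congr 1
      funext n
      simp only [hsmul t ht, lp.coeFn_smul, Pi.smul_apply, smul_eq_mul]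
      ring
    have e1 : t • x - x = (t - 1) • x := by rw [sub_smul, one_smul]
    have e2 : J (t • x) - J x = (t - 1) • J x := by rw [hsmul t ht, sub_smul, one_smul]
    rw [hf]
    simp only
    rw [hnum, e1, e2, norm_smul, norm_smul, hJxnorm, Real.norm_eq_abs]
    congr 1
    ring
  -- the curve tends to x within {x}ᶜ
  have hcont : Filter.Tendsto (fun t : ℝ => t • x) (𝓝[≠] (1:ℝ)) (𝓝[≠] x) := by
    rw [tendsto_nhdsWithin_iff]
    constructor
    · have h1 : Filter.Tendsto (fun t : ℝ => t • x) (𝓝 (1:ℝ)) (𝓝 ((1:ℝ) • x)) :=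
        ((continuous_id.smul continuous_const).tendsto 1)
      rw [one_smul] at h1
      exact h1.mono_left nhdsWithin_le_nhds
    · filter_upwards [self_mem_nhdsWithin] with t ht
      intro h
      have h2 : (t - 1) • x = 0 := by rw [sub_smul, one_smul, h, sub_self]
      rcases smul_eq_zero.mp h2 with h' | h'
      · exact ht (sub_eq_zero.mp h')
      · exact hx0 h'
  -- frequently the value is exactly |S|/(2‖x‖)
  have hfreq : ∃ᶠ z in 𝓝[≠] x, |S| / (2 * ‖x‖) ≤ f z := by
    rcases lt_or_gt_of_ne hxy with hS | hS
    · -- S < 0 : take t > 1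
      have hev : ∀ᶠ t in 𝓝[>] (1:ℝ), |S| / (2 * ‖x‖) ≤ f (t • x) := by
        filter_upwards [Ioo_mem_nhdsGT_of_mem (Set.mem_Ico.mpr ⟨le_refl 1, one_lt_two⟩)] with t ht
        have ht0 : (0:ℝ) < t := by linarith [ht.1]
        rw [hval t ht0, abs_of_pos (by linarith [ht.1] : (0:ℝ) < t - 1),
          show -((t - 1) * S) = (t - 1) * (-S) from by ring,
          mul_div_mul_left _ _ (by linarith [ht.1] : t - 1 ≠ 0), abs_of_neg hS]
      have h1 : ∃ᶠ t in 𝓝[≠] (1:ℝ), |S| / (2 * ‖x‖) ≤ f (t • x) :=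
        (hev.frequently).filter_mono
          (nhdsWithin_mono 1 (fun t ht => ne_of_gt ht))
      exact hcont.frequently h1
    · -- S > 0 : take t < 1
      have hev : ∀ᶠ t in 𝓝[<] (1:ℝ), |S| / (2 * ‖x‖) ≤ f (t • x) := by
        filter_upwards [Ioo_mem_nhdsLT_of_mem
          (Set.mem_Ioc.mpr ⟨by norm_num, le_refl 1⟩ : (1:ℝ) ∈ Set.Ioc (1/2 : ℝ) 1)] with t ht
        have ht0 : (0:ℝ) < t := by linarith [ht.1]
        rw [hval t ht0,
          show |t - 1| = 1 - t from by rw [abs_of_neg (by linarith [ht.2] : t - 1 < 0)]; ring,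
          show -((t - 1) * S) = (1 - t) * S from by ring,
          mul_div_mul_left _ _ (by linarith [ht.2] : 1 - t ≠ 0), abs_of_pos hS]
      have h1 : ∃ᶠ t in 𝓝[≠] (1:ℝ), |S| / (2 * ‖x‖) ≤ f (t • x) :=
        (hev.frequently).filter_mono
          (nhdsWithin_mono 1 (fun t ht => ne_of_lt ht))
      exact hcont.frequently h1
  -- boundedness via Hölder
  have hconj : ((ENNReal.ofReal q).toReal).HolderConjugate ((ENNReal.ofReal p).toReal) := by
    rw [hPt, hQt]
    exact ⟨by rw [inv_one, inv_eq_one_div, inv_eq_one_div]; linarith, hq0, hp0⟩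
  have hbdd : Filter.IsBoundedUnder (· ≤ ·) (𝓝[≠] x) f := by
    refine Filter.isBoundedUnder_of ⟨‖y‖, fun z => ?_⟩
    have hgn : ∀ n : ℕ, J z n - J x n = (J z - J x) n := by
      intro n; rw [lp.coeFn_sub]; rfl
    have hH := lp.tsum_mul_le_mul_norm hconj (J z - J x) y
    have habs : |∑' n : ℕ, (J z - J x) n * y n| ≤ ‖J z - J x‖ * ‖y‖ := by
      calc |∑' n : ℕ, (J z - J x) n * y n| ≤ ∑' n : ℕ, ‖(J z - J x) n * y n‖ := by
            rw [← Real.norm_eq_abs]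
            exact norm_tsum_le_tsum_norm (by simpa [norm_mul] using hH.1)
        _ = ∑' n : ℕ, ‖(J z - J x) n‖ * ‖y n‖ := by simp [norm_mul]
        _ ≤ ‖J z - J x‖ * ‖y‖ := hH.2
    rw [hf]
    simp only [hgn]
    rcases eq_or_ne z x with rfl | hz
    · simp
    · have hd : (0:ℝ) < ‖z - x‖ + ‖J z - J x‖ := by
        have h1 : (0:ℝ) < ‖z - x‖ := norm_pos_iff.mpr (sub_ne_zero.mpr hz)
        linarith [norm_nonneg (J z - J x)]
      rw [div_le_iff₀ hd]
      calc -(∑' n : ℕ, (J z - J x) n * y n) ≤ |∑' n : ℕ, (J z - J x) n * y n| :=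
            neg_le_abs _
        _ ≤ ‖J z - J x‖ * ‖y‖ := habs
        _ ≤ ‖y‖ * (‖z - x‖ + ‖J z - J x‖) := by
            nlinarith [norm_nonneg (z - x), norm_nonneg y, norm_nonneg (J z - J x)]
  have hmain : |S| / (2 * ‖x‖) ≤ Filter.limsup f (𝓝[≠] x) :=
    Filter.le_limsup_of_frequently_le hfreq hbdd
  refine ⟨hmain, ?_⟩
  intro hmem
  simp only [Set.mem_setOf_eq] at hmem
  have heq : (fun z : lp (fun _ : ℕ => ℝ) (ENNReal.ofReal p) =>
      ((∑' n : ℕ, (0 : lp (fun _ : ℕ => ℝ) (ENNReal.ofReal q)) n * (z n - x n)) -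
        ∑' n : ℕ, (J z n - J x n) * y n) / (‖z - x‖ + ‖J z - J x‖)) = f := by
    funext z
    have h0 : (∑' n : ℕ, (0 : lp (fun _ : ℕ => ℝ) (ENNReal.ofReal q)) n * (z n - x n)) = 0 := by
      have h1 : ∀ n : ℕ, (0 : lp (fun _ : ℕ => ℝ) (ENNReal.ofReal q)) n * (z n - x n) = 0 := by
        intro n
        simp only [lp.coeFn_zero, Pi.zero_apply, zero_mul]
      simp only [h1, tsum_zero]
    rw [h0, zero_sub, hf]
  rw [heq] at hmem
  have hc : (0:ℝ) < |S| / (2 * ‖x‖) := div_pos (abs_pos.mpr hxy) (by linarith)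
  exact absurd (le_trans hmain hmem) (not_le.mpr hc)
end

section
/- Let x ∈ l_p (1 < p < ∞), x ≠ 0, and a > 0 with a ≠ 1. Then a·J(x) ∉ D̂*J(x)(x); indeed limsup_{z→x} (⟨aJ(x), z−x⟩ − ⟨J(z)−J(x), x⟩)/(‖z−x‖_p + ‖J(z)−J(x)‖_q) ≥ |a−1|·‖x‖_p/2 > 0. -/
open scoped ENNReal Topology

section Aux

variable (p q : ℝ)

/-- `‖x‖ ^ p = ∑' |x n| ^ p` for `x ∈ ℓᵖ`. -/
lemma lp_norm_rpow_aux (hp : 1 < p) [Fact (1 ≤ ENNReal.ofReal p)]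
    (x : lp (fun _ : ℕ => ℝ) (ENNReal.ofReal p)) :
    ‖x‖ ^ p = ∑' n : ℕ, |x n| ^ p := by
  have hp0 : (0:ℝ) < p := lt_trans zero_lt_one hp
  have htp : (ENNReal.ofReal p).toReal = p := ENNReal.toReal_ofReal hp0.le
  have := lp.norm_rpow_eq_tsum (p := ENNReal.ofReal p) (by rw [htp]; exact hp0) x
  rw [htp] at this
  simpa [Real.norm_eq_abs] using this

/-- pointwise product formula. -/
lemma rpow_mul_self_self_aux (hp : 1 < p) (z : ℝ) :
    |z| ^ (p - 2) * z * z = |z| ^ p := by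
  have hp0 : (0:ℝ) < p := lt_trans zero_lt_one hp
  rcases eq_or_ne z 0 with rfl | hz
  · simp [Real.zero_rpow hp0.ne']
  · have hzp : (0:ℝ) < |z| := abs_pos.mpr hz
    calc |z| ^ (p - 2) * z * z = |z| ^ (p - 2) * (|z| * |z|) := by
          rw [mul_assoc, ← abs_mul_abs_self]
      _ = |z| ^ (p - 2) * |z| ^ (2:ℝ) := by rw [Real.rpow_two, sq]
      _ = |z| ^ (p - 2 + 2) := (Real.rpow_add hzp _ _).symm
      _ = |z| ^ p := by norm_num

variable [Fact (1 ≤ ENNReal.ofReal p)] [Fact (1 ≤ ENNReal.ofReal q)]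
variable (J : lp (fun _ : ℕ => ℝ) (ENNReal.ofReal p) → lp (fun _ : ℕ => ℝ) (ENNReal.ofReal q))
variable (x : lp (fun _ : ℕ => ℝ) (ENNReal.ofReal p))

/-- `⟨J x, x⟩ = ‖x‖²`. -/
lemma duality_pairing_aux (hp : 1 < p)
    (hJ : ∀ z, ∀ n : ℕ, J z n = |z n| ^ (p - 2) * z n / ‖z‖ ^ (p - 2))
    (hx : x ≠ 0) :
    ∑' n : ℕ, J x n * x n = ‖x‖ ^ 2 := by
  have hxn : (0:ℝ) < ‖x‖ := norm_pos_iff.mpr hx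
  have hJxx : ∀ n : ℕ, J x n * x n = |x n| ^ p * (‖x‖ ^ (p - 2))⁻¹ := by
    intro n
    rw [hJ x n, div_mul_eq_mul_div, rpow_mul_self_self_aux p hp (x n), div_eq_mul_inv]
  calc ∑' n : ℕ, J x n * x n = ∑' n : ℕ, |x n| ^ p * (‖x‖ ^ (p - 2))⁻¹ :=
        tsum_congr hJxx
    _ = (∑' n : ℕ, |x n| ^ p) * (‖x‖ ^ (p - 2))⁻¹ := tsum_mul_right
    _ = ‖x‖ ^ p * (‖x‖ ^ (p - 2))⁻¹ := by rw [← lp_norm_rpow_aux p hp x]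
    _ = ‖x‖ ^ (p - (p - 2)) := by
        rw [Real.rpow_sub hxn p (p - 2), div_eq_mul_inv]
    _ = ‖x‖ ^ (2:ℝ) := by norm_num
    _ = ‖x‖ ^ 2 := by rw [Real.rpow_two]

/-- `‖J x‖ = ‖x‖`. -/
lemma duality_norm_aux (hp : 1 < p) (hq : 1 < q) (hpq : 1 / p + 1 / q = 1)
    (hJ : ∀ z, ∀ n : ℕ, J z n = |z n| ^ (p - 2) * z n / ‖z‖ ^ (p - 2))
    (hx : x ≠ 0) :
    ‖J x‖ = ‖x‖ := by
  have hp0 : (0:ℝ) < p := lt_trans zero_lt_one hp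
  have hq0 : (0:ℝ) < q := lt_trans zero_lt_one hq
  have htq : (ENNReal.ofReal q).toReal = q := ENNReal.toReal_ofReal hq0.le
  have hxn : (0:ℝ) < ‖x‖ := norm_pos_iff.mpr hx
  have hxpow : (0:ℝ) < ‖x‖ ^ (p - 2) := Real.rpow_pos_of_pos hxn _
  have hpqmul : p + q = p * q := by field_simp at hpq; linarith
  have hJabs : ∀ n : ℕ, |J x n| ^ q = |x n| ^ p * (‖x‖ ^ ((p - 2) * q))⁻¹ := by
    intro n
    rw [hJ x n]
    rcases eq_or_ne (x n) 0 with h0 | hz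
    · simp [h0, Real.zero_rpow hp0.ne', Real.zero_rpow hq0.ne']
    · have hzp : (0:ℝ) < |x n| := abs_pos.mpr hz
      have h2 : |x n| ^ (p - 2) * |x n| = |x n| ^ (p - 1) := by
        rw [← Real.rpow_add_one hzp.ne' (p - 2), show p - 2 + 1 = p - 1 from by ring]
      have h1 : |(|x n| ^ (p - 2) * x n / ‖x‖ ^ (p - 2))|
          = |x n| ^ (p - 1) / ‖x‖ ^ (p - 2) := by
        rw [abs_div, abs_mul, abs_of_nonneg (Real.rpow_nonneg (abs_nonneg _) _),
          abs_of_pos hxpow, h2]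
      rw [h1, Real.div_rpow (by positivity) hxpow.le,
        ← Real.rpow_mul (abs_nonneg _), ← Real.rpow_mul hxn.le]
      have hpe : (p - 1) * q = p := by nlinarith [hpqmul]
      rw [hpe, div_eq_mul_inv]
  have h1 : ‖J x‖ ^ q = ∑' n : ℕ, |J x n| ^ q := by
    have := lp.norm_rpow_eq_tsum (p := ENNReal.ofReal q) (by rw [htq]; exact hq0) (J x)
    rw [htq] at this
    simpa [Real.norm_eq_abs] using this
  have h2 : ‖J x‖ ^ q = ‖x‖ ^ q := by
    rw [h1]
    calc ∑' n : ℕ, |J x n| ^ q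
        = ∑' n : ℕ, |x n| ^ p * (‖x‖ ^ ((p - 2) * q))⁻¹ := tsum_congr hJabs
      _ = (∑' n : ℕ, |x n| ^ p) * (‖x‖ ^ ((p - 2) * q))⁻¹ := tsum_mul_right
      _ = ‖x‖ ^ p * (‖x‖ ^ ((p - 2) * q))⁻¹ := by rw [← lp_norm_rpow_aux p hp x]
      _ = ‖x‖ ^ (p - (p - 2) * q) := by
          rw [Real.rpow_sub hxn p ((p - 2) * q), div_eq_mul_inv]
      _ = ‖x‖ ^ q := by
          congr 1
          nlinarith [hpqmul]
  exact Real.rpow_left_injOn hq0.ne' (norm_nonneg _) (norm_nonneg _) h2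

/-- homogeneity of `J` on positive scalars. -/
lemma duality_smul_aux (hp : 1 < p)
    (hJ : ∀ z, ∀ n : ℕ, J z n = |z n| ^ (p - 2) * z n / ‖z‖ ^ (p - 2))
    (hx : x ≠ 0) (c : ℝ) (hc : 0 < c) :
    J (c • x) = c • J x := by
  have hxn : (0:ℝ) < ‖x‖ := norm_pos_iff.mpr hx
  apply lp.ext
  funext n
  have hcx : ‖c • x‖ = c * ‖x‖ := by
    rw [norm_smul, Real.norm_eq_abs, abs_of_pos hc]
  have hcxn : (c • x) n = c * x n := by simp [lp.coeFn_smul]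
  have hrhs : (c • J x) n = c * J x n := by simp [lp.coeFn_smul]
  rw [hJ, hrhs, hJ, hcxn, hcx, abs_mul, abs_of_pos hc,
    Real.mul_rpow hc.le (abs_nonneg _), Real.mul_rpow hc.le hxn.le]
  have h1 : (0:ℝ) < c ^ (p - 2) := Real.rpow_pos_of_pos hc _
  have h2 : (0:ℝ) < ‖x‖ ^ (p - 2) := Real.rpow_pos_of_pos hxn _
  field_simp

/-- Hölder for the pairing. -/
lemma holder_pairing_aux (hp : 1 < p) (hq : 1 < q) (hpq : 1 / p + 1 / q = 1)
    (f : lp (fun _ : ℕ => ℝ) (ENNReal.ofReal q))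
    (g : lp (fun _ : ℕ => ℝ) (ENNReal.ofReal p)) :
    |∑' n : ℕ, f n * g n| ≤ ‖f‖ * ‖g‖ := by
  have hp0 : (0:ℝ) < p := lt_trans zero_lt_one hp
  have hq0 : (0:ℝ) < q := lt_trans zero_lt_one hq
  have htp : (ENNReal.ofReal p).toReal = p := ENNReal.toReal_ofReal hp0.le
  have htq : (ENNReal.ofReal q).toReal = q := ENNReal.toReal_ofReal hq0.le
  have hcon : p.HolderConjugate q := ⟨by rw [inv_one, ← one_div, ← one_div]; exact hpq, hp0, hq0⟩
  have hconq : ((ENNReal.ofReal q).toReal).HolderConjugate ((ENNReal.ofReal p).toReal) := by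
    rw [htp, htq]; exact hcon.symm
  obtain ⟨hs, hle⟩ := lp.tsum_mul_le_mul_norm hconq f g
  have hsn : Summable fun n : ℕ => ‖f n * g n‖ := by
    simpa [Real.norm_eq_abs, abs_mul] using hs
  calc |∑' n : ℕ, f n * g n| ≤ ∑' n : ℕ, ‖f n * g n‖ := by
        simpa [Real.norm_eq_abs] using norm_tsum_le_tsum_norm hsn
    _ = ∑' n : ℕ, ‖f n‖ * ‖g n‖ := by simp [norm_mul]
    _ ≤ ‖f‖ * ‖g‖ := hle

end Aux

/-- for nonzero `x ∈ ℓᵖ` (`1 < p < ∞`) and `a > 0`, `a ≠ 1`,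
`a·J(x) ∉ D̂*J(x)(x)`: indeed the limsup as `z → x` of
`(⟨aJ(x), z-x⟩ - ⟨J z - J x, x⟩)/(‖z-x‖ + ‖J z - J x‖)` is at least `|a-1|‖x‖/2 > 0`. -/
theorem smul_duality_not_mem_coderivative_lp (p q : ℝ) (hp : 1 < p) (hq : 1 < q)
    (hpq : 1 / p + 1 / q = 1)
    [Fact (1 ≤ ENNReal.ofReal p)] [Fact (1 ≤ ENNReal.ofReal q)]
    (J : lp (fun _ : ℕ => ℝ) (ENNReal.ofReal p) → lp (fun _ : ℕ => ℝ) (ENNReal.ofReal q))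
    (hJ : ∀ z, ∀ n : ℕ, J z n = |z n| ^ (p - 2) * z n / ‖z‖ ^ (p - 2))
    (x : lp (fun _ : ℕ => ℝ) (ENNReal.ofReal p)) (hx : x ≠ 0)
    (a : ℝ) (ha : 0 < a) (ha1 : a ≠ 1) :
    (|a - 1| * ‖x‖ / 2 ≤
      Filter.limsup
        (fun z => ((∑' n : ℕ, (a * J x n) * (z n - x n)) -
            ∑' n : ℕ, (J z n - J x n) * x n) /
          (‖z - x‖ + ‖J z - J x‖)) (𝓝[≠] x)) ∧
    a • J x ∉
      {w : lp (fun _ : ℕ => ℝ) (ENNReal.ofReal q) |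
        Filter.limsup
          (fun z => ((∑' n : ℕ, w n * (z n - x n)) - ∑' n : ℕ, (J z n - J x n) * x n) /
            (‖z - x‖ + ‖J z - J x‖)) (𝓝[≠] x) ≤ 0} := by
  have hxn : (0:ℝ) < ‖x‖ := norm_pos_iff.mpr hx
  have habs1 : (0:ℝ) < |a - 1| := abs_pos.mpr (sub_ne_zero.mpr ha1)
  have hS : ∑' n : ℕ, J x n * x n = ‖x‖ ^ 2 := duality_pairing_aux p q J x hp hJ hx
  have hnormJ : ‖J x‖ = ‖x‖ := duality_norm_aux p q J x hp hq hpq hJ hx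
  have hJsmul : ∀ c : ℝ, 0 < c → J (c • x) = c • J x :=
    fun c hc => duality_smul_aux p q J x hp hJ hx c hc
  set F : lp (fun _ : ℕ => ℝ) (ENNReal.ofReal p) → ℝ := fun z =>
    ((∑' n : ℕ, (a * J x n) * (z n - x n)) - ∑' n : ℕ, (J z n - J x n) * x n) /
      (‖z - x‖ + ‖J z - J x‖) with hF
  have hT1 : ∀ z, |∑' n : ℕ, (a * J x n) * (z n - x n)| ≤ a * ‖x‖ * ‖z - x‖ := by
    intro z
    have h1 : (∑' n : ℕ, (a * J x n) * (z n - x n))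
        = ∑' n : ℕ, (a • J x) n * ((z - x) n) := by
      apply tsum_congr; intro n
      simp [lp.coeFn_smul, lp.coeFn_sub]
    rw [h1]
    have := holder_pairing_aux p q hp hq hpq (a • J x) (z - x)
    rwa [norm_smul, Real.norm_eq_abs, abs_of_pos ha, hnormJ] at this
  have hT2 : ∀ z, |∑' n : ℕ, (J z n - J x n) * x n| ≤ ‖J z - J x‖ * ‖x‖ := by
    intro z
    have h1 : (∑' n : ℕ, (J z n - J x n) * x n)
        = ∑' n : ℕ, (J z - J x) n * x n := by
      apply tsum_congr; intro n
      simp [lp.coeFn_sub]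
    rw [h1]
    exact holder_pairing_aux p q hp hq hpq (J z - J x) x
  have hC : ∀ z, F z ≤ (a + 1) * ‖x‖ := by
    intro z
    simp only [hF]
    rcases le_or_gt (‖z - x‖ + ‖J z - J x‖) 0 with h | h
    · have h0 : ‖z - x‖ + ‖J z - J x‖ = 0 := le_antisymm h (by positivity)
      rw [h0, div_zero]
      positivity
    · rw [div_le_iff₀ h]
      have h1 := (abs_le.mp (hT1 z)).2
      have h2 := (abs_le.mp (hT2 z)).1
      have h3 : (0:ℝ) ≤ ‖z - x‖ := norm_nonneg _
      have h4 : (0:ℝ) ≤ ‖J z - J x‖ := norm_nonneg _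
      nlinarith [mul_nonneg hxn.le h3, mul_nonneg hxn.le h4,
        mul_nonneg (mul_nonneg ha.le hxn.le) h4, mul_nonneg (mul_nonneg ha.le hxn.le) h3]
  have hbdd : Filter.IsBoundedUnder (· ≤ ·) (𝓝[≠] x) F :=
    Filter.isBoundedUnder_of ⟨(a + 1) * ‖x‖, fun z => hC z⟩
  have hval : ∀ t : ℝ, 0 < t → t * |a - 1| < 1 →
      F ((1 + t * (a - 1)) • x) = |a - 1| * ‖x‖ / 2 := by
    intro t ht htl
    set s := t * (a - 1) with hs
    have hsabs : |s| = t * |a - 1| := by rw [hs, abs_mul, abs_of_pos ht]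
    have hc1 : (0:ℝ) < 1 + s := by
      have := abs_lt.mp (hsabs ▸ htl)
      linarith [this.1]
    have hzx : (1 + s) • x - x = s • x := by
      rw [add_smul, one_smul]; abel
    have hJz : J ((1 + s) • x) = (1 + s) • J x := hJsmul _ hc1
    have hJzx : J ((1 + s) • x) - J x = s • J x := by
      rw [hJz, add_smul, one_smul]; abel
    have hcoe1 : ∀ n : ℕ, ((1 + s) • x) n - x n = s * x n := by
      intro n
      have h' : ((1 + s) • x - x) n = (s • x) n := by rw [hzx]
      exact h'
    have hcoe2 : ∀ n : ℕ, J ((1 + s) • x) n - J x n = s * J x n := by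
      intro n
      have h' : (J ((1 + s) • x) - J x) n = (s • J x) n := by rw [hJzx]
      simpa [lp.coeFn_sub, lp.coeFn_smul] using h'
    have hT1v : ∑' n : ℕ, (a * J x n) * (((1 + s) • x) n - x n) = a * s * ‖x‖ ^ 2 := by
      have h1 : ∀ n : ℕ, (a * J x n) * (((1 + s) • x) n - x n)
          = (a * s) * (J x n * x n) := by
        intro n; rw [hcoe1 n]; ring
      rw [tsum_congr h1, tsum_mul_left, hS]
    have hT2v : ∑' n : ℕ, (J ((1 + s) • x) n - J x n) * x n = s * ‖x‖ ^ 2 := by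
      have h1 : ∀ n : ℕ, (J ((1 + s) • x) n - J x n) * x n = s * (J x n * x n) := by
        intro n; rw [hcoe2 n]; ring
      rw [tsum_congr h1, tsum_mul_left, hS]
    have hden : ‖(1 + s) • x - x‖ + ‖J ((1 + s) • x) - J x‖
        = 2 * (t * |a - 1|) * ‖x‖ := by
      rw [hzx, hJzx, norm_smul, norm_smul, hnormJ, Real.norm_eq_abs, hsabs]; ring
    simp only [hF]
    rw [hT1v, hT2v, hden]
    have hnum : a * s * ‖x‖ ^ 2 - s * ‖x‖ ^ 2 = t * |a - 1| ^ 2 * ‖x‖ ^ 2 := by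
      rw [hs, sq_abs]; ring
    rw [hnum, div_eq_div_iff (by positivity) (by norm_num : (2:ℝ) ≠ 0)]
    ring
  have hmap : Filter.Tendsto (fun t : ℝ => (1 + t * (a - 1)) • x) (𝓝[>] (0:ℝ))
      (𝓝[≠] x) := by
    rw [tendsto_nhdsWithin_iff]
    constructor
    · have hc1 : Filter.Tendsto (fun t : ℝ => 1 + t * (a - 1)) (𝓝 0) (𝓝 1) := by
        have : Filter.Tendsto (fun t : ℝ => 1 + t * (a - 1)) (𝓝 0)
            (𝓝 (1 + 0 * (a - 1))) :=
          (tendsto_const_nhds.add ((Filter.tendsto_id).mul tendsto_const_nhds))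
        simpa using this
      have hcont : Filter.Tendsto (fun t : ℝ => (1 + t * (a - 1)) • x) (𝓝 0)
          (𝓝 ((1:ℝ) • x)) := hc1.smul_const x
      rw [one_smul] at hcont
      exact hcont.mono_left nhdsWithin_le_nhds
    · filter_upwards [self_mem_nhdsWithin] with t ht
      simp only [Set.mem_compl_iff, Set.mem_singleton_iff]
      intro heq
      have h' : (1 + t * (a - 1)) • x - x = 0 := by rw [heq]; simp
      rw [add_smul, one_smul, add_sub_cancel_left] at h'
      rcases smul_eq_zero.mp h' with h | h
      · exact (mul_ne_zero (ne_of_gt ht) (sub_ne_zero.mpr ha1)) h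
      · exact hx h
  have hev : ∀ᶠ t in 𝓝[>] (0:ℝ), |a - 1| * ‖x‖ / 2 ≤ F ((1 + t * (a - 1)) • x) := by
    have hmem : Set.Ioo (0:ℝ) (|a - 1|)⁻¹ ∈ 𝓝[>] (0:ℝ) :=
      Ioo_mem_nhdsGT_of_mem ⟨le_refl 0, by positivity⟩
    filter_upwards [hmem] with t ht
    have h1 : t * |a - 1| < 1 := by
      calc t * |a - 1| < (|a - 1|)⁻¹ * |a - 1| :=
            mul_lt_mul_of_pos_right ht.2 habs1
        _ = 1 := inv_mul_cancel₀ habs1.ne'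
    rw [hval t ht.1 h1]
  have hfreq : ∃ᶠ z in 𝓝[≠] x, |a - 1| * ‖x‖ / 2 ≤ F z :=
    hmap.frequently hev.frequently
  have part1 : |a - 1| * ‖x‖ / 2 ≤ Filter.limsup F (𝓝[≠] x) :=
    Filter.le_limsup_of_frequently_le hfreq hbdd
  refine ⟨part1, ?_⟩
  intro hmem
  simp only [Set.mem_setOf_eq] at hmem
  have hcoeS : ∀ z : lp (fun _ : ℕ => ℝ) (ENNReal.ofReal p),
      (∑' n : ℕ, (a • J x) n * (z n - x n))
      = ∑' n : ℕ, (a * J x n) * (z n - x n) := by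
    intro z
    apply tsum_congr; intro n
    simp [lp.coeFn_smul]
  simp only [hcoeS] at hmem
  rw [← hF] at hmem
  have hle := part1.trans hmem
  have hpos : 0 < |a - 1| * ‖x‖ / 2 := by positivity
  linarith
end

section
/- If f ∈ L¹(S) satisfies f(s) > 0 for almost all s ∈ S, then the normalized duality mapping value J(f) is a singleton consisting of the constant function with value ‖f‖₁. -/
open MeasureTheory
open scoped ENNReal

/-- if `f ∈ L¹(S)` satisfies `f > 0` a.e., then the normalized duality mapping
value `J(f)` is a singleton consisting of the constant function with value `‖f‖₁`:
the constant `‖f‖₁` belongs to `J(f)`, and any `g ∈ L^∞` with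
`∫ f g = ‖g‖_∞ ‖f‖₁ = ‖f‖₁² = ‖g‖_∞²` is a.e. equal to that constant. -/
theorem duality_map_L1_of_ae_pos {S : Type*} [MeasurableSpace S] (μ : Measure S)
    (f : S → ℝ) (hfm : Measurable f) (hfi : Integrable f μ)
    (hf : ∀ᵐ s ∂μ, 0 < f s) :
    ((∫ s, f s * (∫ t, |f t| ∂μ) ∂μ) = (∫ t, |f t| ∂μ) ^ 2 ∧
      eLpNorm (fun _ : S => ∫ t, |f t| ∂μ) ⊤ μ = ENNReal.ofReal (∫ t, |f t| ∂μ)) ∧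
    (∀ g : S → ℝ, MemLp g ⊤ μ →
      (∫ s, f s * g s ∂μ) = (∫ t, |f t| ∂μ) ^ 2 →
      eLpNorm g ⊤ μ = ENNReal.ofReal (∫ t, |f t| ∂μ) →
      g =ᵐ[μ] fun _ => ∫ t, |f t| ∂μ) := by
  set N : ℝ := ∫ t, |f t| ∂μ with hNdef
  have hfeq : f =ᵐ[μ] fun s => |f s| := by
    filter_upwards [hf] with s hs using (abs_of_pos hs).symm
  have hintf : (∫ s, f s ∂μ) = N := integral_congr_ae hfeq
  have hN0 : 0 ≤ N := by
    rw [← hintf]; exact integral_nonneg_of_ae (hf.mono fun s hs => hs.le)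
  constructor
  · constructor
    · rw [integral_mul_const, hintf, sq]
    · by_cases hμ : μ = 0
      · have : N = 0 := by simp [hNdef, hμ]
        simp [hμ, this]
      · rw [eLpNorm_exponent_top, eLpNormEssSup_const _ hμ,
          Real.enorm_eq_ofReal hN0]
  · intro g hg hint hnorm
    have hb : ∀ᵐ s ∂μ, ‖g s‖ ≤ N := by
      have h := ae_le_eLpNormEssSup (f := g) (μ := μ)
      rw [← eLpNorm_exponent_top, hnorm] at h
      filter_upwards [h] with s hs
      rw [← ofReal_norm] at hs
      exact (ENNReal.ofReal_le_ofReal_iff hN0).mp hs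
    have hfg : Integrable (fun s => f s * g s) μ := by
      simpa [mul_comm] using hfi.bdd_mul hg.aestronglyMeasurable hb
    have hfN : Integrable (fun s => f s * N) μ := hfi.mul_const N
    have hnn : 0 ≤ᵐ[μ] fun s => f s * (N - g s) := by
      filter_upwards [hf, hb] with s hs hbs
      have : g s ≤ N := le_trans (le_abs_self _) hbs
      exact mul_nonneg hs.le (by linarith)
    have hi : Integrable (fun s => f s * (N - g s)) μ := by
      have := hfN.sub hfg
      simpa [mul_sub, Pi.sub_def] using this
    have hz : (∫ s, f s * (N - g s) ∂μ) = 0 := by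
      have : (∫ s, f s * (N - g s) ∂μ) = (∫ s, f s * N ∂μ) - ∫ s, f s * g s ∂μ := by
        simp_rw [mul_sub]
        exact integral_sub hfN hfg
      rw [this, integral_mul_const, hintf, hint, sq]
      ring
    have hae := (integral_eq_zero_iff_of_nonneg_ae hnn hi).mp hz
    filter_upwards [hae, hf] with s hs hpos
    have : N - g s = 0 := by
      rcases mul_eq_zero.mp hs with h | h
      · exact absurd h hpos.ne'
      · exact h
    simpa using by linarith [this]
end

section
/- Let f ∈ L¹(S) with μ{s : f(s) = 0} = 0, so J(f) is single-valued, and write f* = J(f). If k* ∈ L^∞(S) satisfies ⟨k*, f⟩ > 0, then along g_t = (1+t)f with g_t* = (1+t)f* ∈ J(g_t), the quotient (⟨k*, g_t − f⟩)/(‖g_t − f‖₁ + ‖g_t* − f*‖_∞) converges to ⟨k*, f⟩/(2‖f‖₁) > 0 as t ↓ 0; consequently k* ∉ D̂*J(f, f*)(0). -/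
open MeasureTheory
open scoped ENNReal Topology

variable {S : Type*} [MeasurableSpace S]

/-- The `L¹` norm of a function, `‖h‖₁ = ∫ |h| dμ`. -/
noncomputable def norm1 (μ : Measure S) (h : S → ℝ) : ℝ := ∫ s, |h s| ∂μ

/-- The `L^∞` norm of a function (essential supremum). -/
noncomputable def normInf (μ : Measure S) (h : S → ℝ) : ℝ := (eLpNorm h ⊤ μ).toReal

/-- The normalized duality mapping `J : L¹(S) ⇉ L^∞(S)`:
`J(h) = {g ∈ L^∞ : ⟨g, h⟩ = ‖g‖_∞‖h‖₁ = ‖h‖₁² = ‖g‖_∞²}`. -/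
noncomputable def JsetL1 (μ : Measure S) (h : S → ℝ) : Set (S → ℝ) :=
  {g | MemLp g ⊤ μ ∧ (∫ s, h s * g s ∂μ) = (norm1 μ h) ^ 2 ∧
    eLpNorm g ⊤ μ = ENNReal.ofReal (norm1 μ h)}

/-- `k ∈ D̂*J(f, f*)(γ)`: the regular (Fréchet) coderivative condition
`limsup_{(g,g*)→(f,f*), g*∈J(g)} (⟨k, g-f⟩ - ⟨γ, g*-f*⟩)/(‖g-f‖₁ + ‖g*-f*‖_∞) ≤ 0`. -/
noncomputable def memMDL1 (μ : Measure S) (f fstar : S → ℝ) (γ : (S → ℝ) → ℝ)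
    (k : S → ℝ) : Prop :=
  ∀ ε > (0 : ℝ), ∃ δ > (0 : ℝ), ∀ g gstar : S → ℝ, gstar ∈ JsetL1 μ g →
    norm1 μ (fun s => g s - f s) < δ → normInf μ (fun s => gstar s - fstar s) < δ →
    ((∫ s, k s * (g s - f s) ∂μ) - γ (fun s => gstar s - fstar s)) /
      (norm1 μ (fun s => g s - f s) + normInf μ (fun s => gstar s - fstar s)) ≤ ε

lemma aux_eLpNorm_top_abs_const (μ : Measure S) (hμ : μ ≠ 0) (g : S → ℝ) (c : ℝ)
    (h : ∀ s, |g s| = c) : eLpNorm g ⊤ μ = ENNReal.ofReal c := by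
  rw [eLpNorm_exponent_top, eLpNormEssSup]
  have : (fun x => ‖g x‖ₑ) = fun _ => ENNReal.ofReal c := by
    funext s
    rw [Real.enorm_eq_ofReal_abs, h s]
  rw [this, essSup_const _ hμ]


/-- let `f ∈ L¹(S)` with `μ{f = 0} = 0`, so `J(f)` is single-valued with
value `f* = ‖f‖₁ sign f`.  If `k* ∈ L^∞` has `⟨k*, f⟩ > 0`, then along `g_t = (1+t)f`,
`g_t* = (1+t)f* ∈ J(g_t)`, the quotient `⟨k*, g_t-f⟩/(‖g_t-f‖₁ + ‖g_t*-f*‖_∞)` converges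
to `⟨k*, f⟩/(2‖f‖₁) > 0` as `t ↓ 0`; consequently `k* ∉ D̂*J(f, f*)(0)`. -/
theorem kstar_not_mem_coderivative_L1 (μ : Measure S)
    (f : S → ℝ) (hfm : Measurable f) (hfi : Integrable f μ)
    (hf0 : ¬ (f =ᵐ[μ] 0)) (hfz : μ {s | f s = 0} = 0)
    (fstar : S → ℝ)
    (hfstar : ∀ s : S, fstar s = if 0 < f s then norm1 μ f else -norm1 μ f)
    (k : S → ℝ) (hk : MemLp k ⊤ μ)
    (hkf : 0 < ∫ s, k s * f s ∂μ) :
    Filter.Tendsto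
      (fun t : ℝ =>
        (∫ s, k s * ((1 + t) * f s - f s) ∂μ) /
          (norm1 μ (fun s => (1 + t) * f s - f s) +
            normInf μ (fun s => (1 + t) * fstar s - fstar s)))
      (𝓝[>] 0) (𝓝 ((∫ s, k s * f s ∂μ) / (2 * norm1 μ f))) ∧
    0 < (∫ s, k s * f s ∂μ) / (2 * norm1 μ f) ∧
    ¬ memMDL1 μ f fstar (fun _ => 0) k := by
  set c := norm1 μ f with hcdef
  -- positivity of c
  have hcnn : 0 ≤ c := integral_nonneg fun s => abs_nonneg _
  have hc : 0 < c := by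
    rcases hcnn.lt_or_eq with h | h
    · exact h
    · exfalso
      apply hf0
      have h0 : ∫ s, |f s| ∂μ = 0 := h.symm
      have := (integral_eq_zero_iff_of_nonneg (fun s => abs_nonneg (f s)) hfi.abs).mp h0
      filter_upwards [this] with s hs
      simpa using abs_eq_zero.mp hs
  have hμ0 : μ ≠ 0 := by
    intro h
    apply hf0
    rw [h]
    rw [show MeasureTheory.ae (0 : Measure S) = ⊥ from ae_zero]
    exact Filter.eventually_bot
  -- |fstar s| = c
  have habsf : ∀ s, |fstar s| = c := by
    intro s
    rw [hfstar s]
    split <;> simp [abs_of_nonneg hcnn, abs_of_nonpos (neg_nonpos.mpr hcnn), hcnn]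
  -- integral of k * (t f)
  have hint : ∀ t : ℝ, (∫ s, k s * ((1 + t) * f s - f s) ∂μ) = t * ∫ s, k s * f s ∂μ := by
    intro t
    have : (fun s => k s * ((1 + t) * f s - f s)) = fun s => t * (k s * f s) := by
      funext s; ring
    rw [this, integral_const_mul]
  -- norm1 of (t f)
  have hn1 : ∀ t : ℝ, 0 ≤ t → norm1 μ (fun s => (1 + t) * f s - f s) = t * c := by
    intro t ht
    have : (fun s => |(1 + t) * f s - f s|) = fun s => t * |f s| := by
      funext s
      rw [show (1 + t) * f s - f s = t * f s by ring, abs_mul, abs_of_nonneg ht]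
    rw [norm1, this, integral_const_mul]
    rfl
  -- normInf of (t fstar)
  have hnInf : ∀ t : ℝ, 0 ≤ t → normInf μ (fun s => (1 + t) * fstar s - fstar s) = t * c := by
    intro t ht
    have habs : ∀ s, |(1 + t) * fstar s - fstar s| = t * c := by
      intro s
      rw [show (1 + t) * fstar s - fstar s = t * fstar s by ring, abs_mul, abs_of_nonneg ht,
        habsf s]
    rw [normInf, aux_eLpNorm_top_abs_const μ hμ0 _ _ habs,
      ENNReal.toReal_ofReal (by positivity)]
  set I := ∫ s, k s * f s ∂μ with hIdef
  -- value of quotient for t > 0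
  have hval : ∀ t : ℝ, 0 < t →
      (∫ s, k s * ((1 + t) * f s - f s) ∂μ) /
        (norm1 μ (fun s => (1 + t) * f s - f s) +
          normInf μ (fun s => (1 + t) * fstar s - fstar s)) = I / (2 * c) := by
    intro t ht
    rw [hint t, hn1 t ht.le, hnInf t ht.le]
    rw [show t * c + t * c = t * (2 * c) by ring]
    rw [mul_div_mul_left _ _ (ne_of_gt ht)]
  have hpos : 0 < I / (2 * c) := div_pos hkf (by positivity)
  refine ⟨?_, hpos, ?_⟩
  · -- tendsto: eventually constant
    apply Filter.Tendsto.congr' _ tendsto_const_nhds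
    filter_upwards [self_mem_nhdsWithin] with t ht
    exact (hval t ht).symm
  · -- not in coderivative
    intro hmem
    obtain ⟨δ, hδ, hδ'⟩ := hmem (I / (4 * c)) (div_pos hkf (by positivity))
    set t := min 1 (δ / (2 * c)) with htdef
    have ht : 0 < t := lt_min one_pos (div_pos hδ (by positivity))
    have htc : t * c < δ := by
      calc t * c ≤ (δ / (2 * c)) * c := by
            apply mul_le_mul_of_nonneg_right (min_le_right _ _) hcnn
        _ = δ / 2 := by field_simp
        _ < δ := by linarith
    -- gstar ∈ JsetL1 μ g
    have hffstar : (∫ s, f s * fstar s ∂μ) = c ^ 2 := by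
      have : (fun s => f s * fstar s) = fun s => c * |f s| := by
        funext s
        rw [hfstar s]
        by_cases h : 0 < f s
        · rw [if_pos h, abs_of_pos h]; ring
        · rw [if_neg h, abs_of_nonpos (not_lt.mp h)]; ring
      rw [this, integral_const_mul, show (∫ s, |f s| ∂μ) = c from rfl, sq]
    have hn1g : norm1 μ (fun s => (1 + t) * f s) = (1 + t) * c := by
      have : (fun s => |(1 + t) * f s|) = fun s => (1 + t) * |f s| := by
        funext s; rw [abs_mul, abs_of_nonneg (by linarith)]
      rw [norm1, this, integral_const_mul]; rfl
    have habsg : ∀ s, |(1 + t) * fstar s| = (1 + t) * c := by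
      intro s; rw [abs_mul, abs_of_nonneg (by linarith : (0:ℝ) ≤ 1 + t), habsf s]
    have help : eLpNorm (fun s => (1 + t) * fstar s) ⊤ μ = ENNReal.ofReal ((1 + t) * c) :=
      aux_eLpNorm_top_abs_const μ hμ0 _ _ habsg
    have hfstarm : Measurable fstar := by
      have : fstar = fun s => if 0 < f s then c else -c := funext hfstar
      rw [this]
      exact Measurable.ite (measurableSet_lt measurable_const hfm) measurable_const
        measurable_const
    have hJ : (fun s => (1 + t) * fstar s) ∈ JsetL1 μ (fun s => (1 + t) * f s) := by
      refine ⟨⟨(hfstarm.const_mul _).aestronglyMeasurable, ?_⟩, ?_, ?_⟩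
      · rw [help]; exact ENNReal.ofReal_lt_top
      · have : (fun s => ((1 + t) * f s) * ((1 + t) * fstar s))
            = fun s => (1 + t) ^ 2 * (f s * fstar s) := by funext s; ring
        rw [this, integral_const_mul, hffstar, hn1g]
        ring
      · rw [help, hn1g]
    have h1 := hδ' (fun s => (1 + t) * f s) (fun s => (1 + t) * fstar s) hJ
      (by rw [hn1 t ht.le]; exact htc) (by rw [hnInf t ht.le]; exact htc)
    rw [sub_zero, hval t ht] at h1
    -- I/(2c) ≤ I/(4c) contradiction
    have : I / (4 * c) < I / (2 * c) := by
      apply div_lt_div_of_pos_left hkf (by positivity)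
      linarith
    linarith
end

section
/- For the normalized duality mapping J on L¹(S) at the origin: D̂*J(θ, θ*)(θ**) = {θ*}. Concretely, θ* ∈ D̂*J(θ, θ*)(θ**); and for any nonzero k* ∈ L^∞(S), choosing D ⊆ {k* > 0} (or {k* < 0}) with 0 < μ(D) < ∞ and taking h_t = t·χ_D with j(h_t) ∈ J(h_t) having ‖j(h_t)‖_∞ = tμ(D), one gets limsup_{t↓0} ⟨k*, h_t⟩/(‖h_t‖₁ + ‖j(h_t)‖_∞) = (∫_D k* dμ)/(2μ(D)) ≠ 0, hence k* ∉ D̂*J(θ, θ*)(θ**). -/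
open MeasureTheory
open scoped ENNReal Topology

variable {S : Type*} [MeasurableSpace S]

/-- `c • χ_D` as an indicator. -/
lemma smul_ind_eq (D : Set S) (c : ℝ) :
    (fun s => c * D.indicator (fun _ => (1 : ℝ)) s) = D.indicator (fun _ => c) := by
  funext s
  by_cases hs : s ∈ D <;> simp [Set.indicator_of_mem, Set.indicator_of_notMem, hs]

lemma norm1_smul_ind (μ : Measure S) (D : Set S) (hDm : MeasurableSet D) (c : ℝ) :
    norm1 μ (fun s => c * D.indicator (fun _ => (1 : ℝ)) s) = |c| * (μ D).toReal := by
  have h : (fun s => |c * D.indicator (fun _ => (1 : ℝ)) s|) = D.indicator (fun _ => |c|) := by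
    funext s
    by_cases hs : s ∈ D <;> simp [Set.indicator_of_mem, Set.indicator_of_notMem, hs]
  rw [norm1, h, integral_indicator_const _ hDm, smul_eq_mul, mul_comm, measureReal_def]

lemma eLpNorm_ind (μ : Measure S) {D : Set S} (hD0 : μ D ≠ 0) (c : ℝ) :
    eLpNorm (D.indicator (fun _ => c)) ⊤ μ = ENNReal.ofReal |c| := by
  rw [eLpNorm_exponent_top, eLpNormEssSup_indicator_const_eq D c hD0,
    Real.enorm_eq_ofReal_abs]

lemma integral_k_smul_ind (μ : Measure S) {D : Set S} (hDm : MeasurableSet D)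
    (k : S → ℝ) (c : ℝ) :
    (∫ s, k s * (c * D.indicator (fun _ => (1 : ℝ)) s) ∂μ) = c * ∫ s in D, k s ∂μ := by
  have h : (fun s => k s * (c * D.indicator (fun _ => (1 : ℝ)) s))
      = fun s => c * D.indicator k s := by
    funext s
    by_cases hs : s ∈ D <;> simp [Set.indicator_of_mem, Set.indicator_of_notMem, hs, mul_comm]
  rw [h, integral_const_mul, integral_indicator hDm]

/-- membership of the dual element in `J(c • χ_D)`. -/
lemma mem_Jset (μ : Measure S) {D : Set S} (hDm : MeasurableSet D) (hD0 : μ D ≠ 0) (c : ℝ) :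
    (fun s => (c * (μ D).toReal) * D.indicator (fun _ => (1 : ℝ)) s) ∈
      JsetL1 μ (fun s => c * D.indicator (fun _ => (1 : ℝ)) s) := by
  have hm0 : (0:ℝ) ≤ (μ D).toReal := ENNReal.toReal_nonneg
  refine ⟨?_, ?_, ?_⟩
  · rw [smul_ind_eq]
    exact (memLp_top_const _).indicator hDm
  · have h : (fun s => (c * D.indicator (fun _ => (1 : ℝ)) s) *
        ((c * (μ D).toReal) * D.indicator (fun _ => (1 : ℝ)) s))
        = D.indicator (fun _ => c * (c * (μ D).toReal)) := by
      funext s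
      by_cases hs : s ∈ D <;> simp [Set.indicator_of_mem, Set.indicator_of_notMem, hs]
    rw [h, integral_indicator_const _ hDm, smul_eq_mul, measureReal_def, norm1_smul_ind μ D hDm, mul_pow, sq_abs]
    ring
  · rw [smul_ind_eq, eLpNorm_ind μ hD0, norm1_smul_ind μ D hDm, abs_mul,
      abs_of_nonneg hm0]


/-- for the normalized duality mapping `J` on `L¹(S)` at the origin,
`D̂*J(θ, θ*)(θ**) = {θ*}`: a function `k* ∈ L^∞` belongs to the coderivative set iff it is
(a.e.) zero.  Moreover, for `D ⊆ {k* > 0}` with `0 < μ D < ∞`, along `h_t = t·χ_D` with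
`j(h_t) ∈ J(h_t)` of norm `‖j(h_t)‖_∞ = tμ(D)` the quotient
`⟨k*, h_t⟩/(‖h_t‖₁ + ‖j(h_t)‖_∞)` tends to `(∫_D k*)/(2μ(D))`, which is nonzero. -/
theorem coderivative_L1_at_origin (μ : Measure S) [SigmaFinite μ]
    (k : S → ℝ) (hkm : Measurable k) (hk : MemLp k ⊤ μ) :
    (memMDL1 μ (fun _ => 0) (fun _ => 0) (fun _ => 0) k ↔ k =ᵐ[μ] 0) ∧
    (∀ D : Set S, MeasurableSet D → D ⊆ {s | 0 < k s} → 0 < μ D → μ D < ⊤ →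
      (Filter.Tendsto
        (fun t : ℝ =>
          (∫ s, k s * (t * D.indicator (fun _ => (1 : ℝ)) s) ∂μ) /
            (norm1 μ (fun s => t * D.indicator (fun _ => (1 : ℝ)) s) + t * (μ D).toReal))
        (𝓝[>] 0) (𝓝 ((∫ s in D, k s ∂μ) / (2 * (μ D).toReal))) ∧
        (∫ s in D, k s ∂μ) / (2 * (μ D).toReal) ≠ 0)) := by
  have hint : ∀ D : Set S, MeasurableSet D → μ D < ⊤ → IntegrableOn k D μ := by
    intro D hDm hfin
    haveI : IsFiniteMeasure (μ.restrict D) := ⟨by rwa [Measure.restrict_apply_univ]⟩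
    exact memLp_one_iff_integrable.mp (MemLp.mono_exponent (hk.restrict D) le_top)
  constructor
  · constructor
    · intro hmem
      refine ae_eq_zero_of_forall_setIntegral_eq_of_sigmaFinite
        (fun s hs hfin => hint s hs hfin) ?_
      intro D hDm hfin
      by_cases hD0 : μ D = 0
      · rw [Measure.restrict_eq_zero.mpr hD0, integral_zero_measure]
      set m := (μ D).toReal with hm
      have hmpos : 0 < m := ENNReal.toReal_pos hD0 hfin.ne
      set I := ∫ s in D, k s ∂μ with hI
      have step : ∀ ε > (0:ℝ), I ≤ ε * (2 * m) ∧ -I ≤ ε * (2 * m) := by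
        intro ε hε
        obtain ⟨δ, hδ, H⟩ := hmem ε hε
        simp only [sub_zero] at H
        set t := δ / (2 * m) with ht
        have htpos : 0 < t := div_pos hδ (by linarith)
        have htm : t * m < δ := by
          rw [ht, div_mul_eq_mul_div, div_lt_iff₀ (by linarith)]
          nlinarith
        have hq : ∀ c : ℝ, |c| = t → (c * I) / (t * m + t * m) ≤ ε := by
          intro c hc
          have h1 : norm1 μ (fun s => c * D.indicator (fun _ => (1:ℝ)) s) = t * m := by
            rw [norm1_smul_ind μ D hDm, hc]
          have h2 : normInf μ (fun s => (c * m) * D.indicator (fun _ => (1:ℝ)) s) = t * m := by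
            rw [normInf, smul_ind_eq, eLpNorm_ind μ hD0, ENNReal.toReal_ofReal (abs_nonneg _),
              abs_mul, hc, abs_of_nonneg hmpos.le]
          have h3 := H _ _ (mem_Jset μ hDm hD0 c) (by rw [h1]; exact htm) (by rw [h2]; exact htm)
          rwa [integral_k_smul_ind μ hDm, h1, h2, ← hI] at h3
        have h2m : t * m + t * m = t * (2 * m) := by ring
        have hqp := hq t (abs_of_pos htpos)
        have hqn := hq (-t) (by rw [abs_neg, abs_of_pos htpos])
        rw [h2m, mul_div_mul_left I (2 * m) htpos.ne'] at hqp
        rw [show (-t) * I = t * (-I) by ring, h2m,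
          mul_div_mul_left (-I) (2 * m) htpos.ne'] at hqn
        constructor
        · rw [div_le_iff₀ (by linarith)] at hqp; linarith
        · rw [div_le_iff₀ (by linarith)] at hqn; linarith
      by_contra hI0
      have habs : 0 < |I| := abs_pos.mpr hI0
      obtain ⟨hA, hB⟩ := step (|I| / (4 * m)) (by positivity)
      have hcalc : |I| / (4 * m) * (2 * m) = |I| / 2 := by
        field_simp; ring
      rw [hcalc] at hA hB
      have : |I| ≤ |I| / 2 := abs_le.mpr ⟨by linarith, by linarith⟩
      linarith
    · intro hk0 ε hε
      refine ⟨1, one_pos, fun g gstar _ _ _ => ?_⟩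
      simp only [sub_zero]
      have hz : (∫ s, k s * g s ∂μ) = 0 := by
        apply integral_eq_zero_of_ae
        filter_upwards [hk0] with s hs
        simp [hs]
      rw [hz]
      simp [le_of_lt hε]
  · intro D hDm hsub hpos hfin
    have hD0 : μ D ≠ 0 := hpos.ne'
    have hmpos : 0 < (μ D).toReal := ENNReal.toReal_pos hD0 hfin.ne
    have hIpos : 0 < ∫ s in D, k s ∂μ := by
      rw [setIntegral_pos_iff_support_of_nonneg_ae ?_ (hint D hDm hfin)]
      · have hsupp : Function.support k ∩ D = D :=
          Set.inter_eq_self_of_subset_right fun s hs => ne_of_gt (hsub hs)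
        rw [hsupp]; exact hpos
      · filter_upwards [ae_restrict_mem hDm] with s hs
        exact (hsub hs).le
    constructor
    · apply Filter.Tendsto.congr' _ tendsto_const_nhds
      refine Filter.eventuallyEq_of_mem self_mem_nhdsWithin fun t ht => ?_
      have ht0 : (0:ℝ) < t := ht
      rw [integral_k_smul_ind μ hDm, norm1_smul_ind μ D hDm, abs_of_pos ht0,
        show t * (μ D).toReal + t * (μ D).toReal = t * (2 * (μ D).toReal) by ring,
        mul_div_mul_left _ _ ht0.ne']
    · exact ne_of_gt (div_pos hIpos (by linarith))
end

section
/- Let f ∈ L¹(S) with f ≥ 0 a.e. and f ≠ 0; let f* ∈ J(f) be defined by f* = ‖f‖₁ on {f > 0} and 0 on {f = 0}; and let f** be the functional on L^∞ given by k* ↦ ∫ k* f dμ. Then −f* ∉ D̂*J(f, f*)(f**): along h_t = f − t·χ_D (with D ⊆ {f > a}, 0 < μ(D) < ∞, 0 < t < a) and h_t* ∈ J(h_t) analogous to f*, the quotient (⟨−f*, h_t − f⟩ − ⟨h_t* − f*, f⟩)/(‖h_t − f‖₁ + ‖h_t* − f*‖_∞) converges to ‖f‖₁ > 0. -/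
open MeasureTheory
open scoped ENNReal Topology

variable {S : Type*} [MeasurableSpace S]

/-- let `f ∈ L¹(S)`, `f ≥ 0` a.e., `f ≠ 0`, let
`f* = ‖f‖₁ on {f > 0}`, `0 on {f = 0}` (an element of `J(f)`), and let `f**` be the
functional `k* ↦ ∫ k* f dμ` on `L^∞`.  Then `−f* ∉ D̂*J(f, f*)(f**)`: along
`h_t = f − t χ_D` (where `D ⊆ {f > a}`, `0 < μ D < ∞`, `0 < t < a`) with
`h_t* ∈ J(h_t)` defined analogously to `f*`, the Mordukhovich quotient converges to
`‖f‖₁ > 0`. -/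
theorem neg_fstar_not_mem_coderivative_L1 (μ : Measure S)
    (f : S → ℝ) (hfm : Measurable f) (hfi : Integrable f μ)
    (hfpos : ∀ᵐ s ∂μ, 0 ≤ f s) (hf0 : ¬ (f =ᵐ[μ] 0))
    (fstar : S → ℝ)
    (hfstar : ∀ s : S, fstar s = if 0 < f s then norm1 μ f else 0)
    (a : ℝ) (ha : 0 < a)
    (D : Set S) (hD : MeasurableSet D) (hDf : D ⊆ {s | a < f s})
    (hD0 : 0 < μ D) (hDfin : μ D < ⊤) :
    Filter.Tendsto
      (fun t : ℝ =>
        ((∫ s, (-fstar s) *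
            ((f s - t * D.indicator (fun _ => (1 : ℝ)) s) - f s) ∂μ) -
          ∫ s, ((if 0 < f s then
              norm1 μ (fun u => f u - t * D.indicator (fun _ => (1 : ℝ)) u)
            else 0) - fstar s) * f s ∂μ) /
          (norm1 μ (fun s => (f s - t * D.indicator (fun _ => (1 : ℝ)) s) - f s) +
            normInf μ (fun s =>
              (if 0 < f s then
                norm1 μ (fun u => f u - t * D.indicator (fun _ => (1 : ℝ)) u)
              else 0) - fstar s)))
      (𝓝[Set.Ioo 0 a] 0) (𝓝 (norm1 μ f)) ∧
    0 < norm1 μ f ∧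
    ¬ memMDL1 μ f fstar (fun h => ∫ s, h s * f s ∂μ) (fun s => -fstar s) := by
  classical
  set N := norm1 μ f with hN
  set χ : S → ℝ := D.indicator (fun _ => (1:ℝ)) with hχ
  set M := (μ D).toReal with hM
  have hMpos : 0 < M := ENNReal.toReal_pos hD0.ne' hDfin.ne
  have hχi : Integrable χ μ := by
    rw [hχ]
    exact (integrable_indicator_iff hD).2 (integrableOn_const hDfin.ne)
  have hχint : ∫ s, χ s ∂μ = M := by
    rw [hχ, hM]; exact integral_indicator_one hD
  have hχ01 : ∀ s, χ s = if s ∈ D then (1:ℝ) else 0 := fun s => by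
    rw [hχ]; simp [Set.indicator_apply]
  have hNf : N = ∫ s, f s ∂μ := by
    rw [hN]; exact integral_congr_ae (hfpos.mono fun s hs => abs_of_nonneg hs)
  have hNpos : 0 < N := by
    rcases lt_or_eq_of_le (integral_nonneg_of_ae hfpos) with h | h
    · rwa [hNf]
    · exact absurd ((integral_eq_zero_iff_of_nonneg_ae hfpos hfi).1 h.symm) hf0
  have haM : a * M ≤ N := by
    rw [hNf, ← hχint, ← integral_const_mul]
    refine integral_mono_ae (hχi.const_mul a) hfi ?_
    filter_upwards [hfpos] with s hs
    rw [hχ01]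
    by_cases hsD : s ∈ D
    · simpa [hsD] using (hDf hsD).le
    · simpa [hsD] using hs
  set A : Set S := {s | 0 < f s} with hA
  have hAm : MeasurableSet A := measurableSet_lt measurable_const hfm
  have hDA : D ⊆ A := fun s hs => (ha.trans (hDf hs))
  have hA0 : μ A ≠ 0 := fun h =>
    hD0.ne' (le_antisymm ((measure_mono hDA).trans h.le) zero_le)
  have key : ∀ t : ℝ, t ∈ Set.Ioo 0 a →
      (norm1 μ (fun s => (f s - t * χ s) - f s) = t * M) ∧
      (norm1 μ (fun u => f u - t * χ u) = N - t * M) ∧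
      ((∫ s, (-fstar s) * ((f s - t * χ s) - f s) ∂μ) = t * (N * M)) ∧
      ((∫ s, ((if 0 < f s then norm1 μ (fun u => f u - t * χ u) else 0) - fstar s) * f s ∂μ)
        = -(t * M) * N) ∧
      (normInf μ (fun s =>
        (if 0 < f s then norm1 μ (fun u => f u - t * χ u) else 0) - fstar s) = t * M) := by
    intro t ht
    obtain ⟨ht0, hta⟩ := ht
    have h1 : norm1 μ (fun s => (f s - t * χ s) - f s) = t * M := by
      rw [norm1, ← hχint, ← integral_const_mul]
      refine integral_congr_ae (Filter.Eventually.of_forall fun s => ?_)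
      dsimp only
      rw [hχ01 s]
      by_cases hsD : s ∈ D <;> simp [hsD, abs_of_nonneg ht0.le]
    have h2 : norm1 μ (fun u => f u - t * χ u) = N - t * M := by
      have : norm1 μ (fun u => f u - t * χ u) = ∫ u, f u - t * χ u ∂μ := by
        refine integral_congr_ae ?_
        filter_upwards [hfpos] with s hs
        rw [hχ01 s]
        by_cases hsD : s ∈ D
        · have haf : a < f s := hDf hsD
          rw [abs_of_nonneg]
          simp only [hsD, if_pos]
          nlinarith
        · simpa [hsD] using abs_of_nonneg hs
      rw [this, integral_sub hfi (hχi.const_mul t), integral_const_mul, hχint, hNf]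
    have hdiff : ∀ s, ((if 0 < f s then norm1 μ (fun u => f u - t * χ u) else 0) - fstar s)
        = A.indicator (fun _ => -(t * M)) s := by
      intro s
      rw [hfstar s, h2, Set.indicator_apply]
      by_cases hs : 0 < f s
      · simp only [hs, if_pos]
        have : s ∈ A := hs
        simp [this]
      · have : s ∉ A := hs
        simp [hs, this]
    have h3 : (∫ s, (-fstar s) * ((f s - t * χ s) - f s) ∂μ) = t * (N * M) := by
      have : ∀ s, (-fstar s) * ((f s - t * χ s) - f s) = (t * N) * χ s := by
        intro s
        rw [hχ01, hfstar s]
        by_cases hsD : s ∈ D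
        · have hpos : 0 < f s := ha.trans (hDf hsD)
          simp [hsD, hpos]; ring
        · simp [hsD]
      rw [integral_congr_ae (Filter.Eventually.of_forall this), integral_const_mul, hχint]
      ring
    have h4 : (∫ s, ((if 0 < f s then norm1 μ (fun u => f u - t * χ u) else 0) - fstar s)
        * f s ∂μ) = -(t * M) * N := by
      have : ∀ᵐ s ∂μ, ((if 0 < f s then norm1 μ (fun u => f u - t * χ u) else 0) - fstar s)
          * f s = (-(t * M)) * f s := by
        filter_upwards [hfpos] with s hs
        rw [hdiff s, Set.indicator_apply]
        by_cases hsA : s ∈ A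
        · simp [hsA]
        · have : f s = 0 := le_antisymm (not_lt.1 hsA) hs
          simp [this]
      rw [integral_congr_ae this, integral_const_mul, ← hNf]
    have h5 : normInf μ (fun s =>
        (if 0 < f s then norm1 μ (fun u => f u - t * χ u) else 0) - fstar s) = t * M := by
      rw [normInf]
      have : (fun s => (if 0 < f s then norm1 μ (fun u => f u - t * χ u) else 0) - fstar s)
          = A.indicator (fun _ => -(t * M)) := funext hdiff
      rw [this, eLpNorm_exponent_top, eLpNormEssSup_indicator_const_eq A _ hA0]
      rw [toReal_enorm, Real.norm_eq_abs, abs_neg,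
        abs_of_nonneg (by positivity)]
    exact ⟨h1, h2, h3, h4, h5⟩
  have quot : ∀ t : ℝ, t ∈ Set.Ioo 0 a →
      ((∫ s, (-fstar s) * ((f s - t * χ s) - f s) ∂μ) -
        ∫ s, ((if 0 < f s then norm1 μ (fun u => f u - t * χ u) else 0) - fstar s) * f s ∂μ) /
        (norm1 μ (fun s => (f s - t * χ s) - f s) +
          normInf μ (fun s =>
            (if 0 < f s then norm1 μ (fun u => f u - t * χ u) else 0) - fstar s)) = N := by
    intro t ht
    obtain ⟨h1, h2, h3, h4, h5⟩ := key t ht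
    rw [h1, h3, h4, h5]
    have htM : 0 < t * M := mul_pos ht.1 hMpos
    have ht0' : t ≠ 0 := ht.1.ne'
    field_simp
    ring
  refine ⟨?_, hNpos, ?_⟩
  · refine Filter.Tendsto.congr' ?_ tendsto_const_nhds
    filter_upwards [self_mem_nhdsWithin] with t ht
    exact (quot t ht).symm
  · intro hmem
    obtain ⟨δ, hδ, H⟩ := hmem (N / 2) (by positivity)
    set t := min (a / 2) (δ / (2 * M)) with htdef
    have ht0 : 0 < t := lt_min (by positivity) (by positivity)
    have hta : t < a := (min_le_left _ _).trans_lt (by linarith)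
    have htIoo : t ∈ Set.Ioo 0 a := ⟨ht0, hta⟩
    have htM : t * M < δ := by
      have h1 : t ≤ δ / (2 * M) := min_le_right _ _
      have hM' : M ≠ 0 := hMpos.ne'
      have h3' : δ / (2 * M) * M = δ / 2 := by field_simp
      nlinarith
    obtain ⟨h1, h2, h3, h4, h5⟩ := key t htIoo
    set nt := norm1 μ (fun u => f u - t * χ u) with hnt
    have hntpos : 0 < nt := by
      rw [h2]
      nlinarith
    have hmem' : (fun s => if 0 < f s then nt else 0) ∈
        JsetL1 μ (fun s => f s - t * χ s) := by
      refine ⟨?_, ?_, ?_⟩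
      · refine memLp_top_of_bound ?_ |nt| (Filter.Eventually.of_forall fun s => ?_)
        · exact (Measurable.ite (measurableSet_lt measurable_const hfm)
            measurable_const measurable_const).aestronglyMeasurable
        · by_cases hs : 0 < f s <;> simp [hs, Real.norm_eq_abs, abs_nonneg]
      · have heq : ∀ᵐ s ∂μ, (f s - t * χ s) * (if 0 < f s then nt else 0)
            = nt * (f s - t * χ s) := by
          filter_upwards [hfpos] with s hs
          by_cases h : 0 < f s
          · simp [h]; ring
          · have hf0' : f s = 0 := le_antisymm (not_lt.1 h) hs
            have hsD : s ∉ D := fun hsD => absurd (hDf hsD) (by simp [hf0']; linarith)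
            rw [hχ01]
            simp [h, hf0', hsD]
        rw [integral_congr_ae heq, integral_const_mul,
          integral_sub hfi (hχi.const_mul t), integral_const_mul, hχint, ← hNf, ← hnt, h2]
        ring
      · have : (fun s => if 0 < f s then nt else 0) = A.indicator (fun _ => nt) := by
          funext s
          rw [Set.indicator_apply]
          by_cases hs : 0 < f s
          · have : s ∈ A := hs
            simp [hs, this]
          · have : s ∉ A := hs
            simp [hs, this]
        rw [this, eLpNorm_exponent_top, eLpNormEssSup_indicator_const_eq A _ hA0,
          ← ofReal_norm, Real.norm_eq_abs, abs_of_nonneg hntpos.le, hnt]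
    have := H (fun s => f s - t * χ s) (fun s => if 0 < f s then nt else 0) hmem'
      (by rw [show (fun s => (fun s => f s - t * χ s) s - f s)
            = (fun s => (f s - t * χ s) - f s) from rfl, h1]; exact htM)
      (by rw [show (fun s => (fun s => if 0 < f s then nt else 0) s - fstar s)
            = (fun s => (if 0 < f s then nt else 0) - fstar s) from rfl]
          rw [show (fun s => (if 0 < f s then nt else 0) - fstar s)
            = (fun s => (if 0 < f s then norm1 μ (fun u => f u - t * χ u) else 0) - fstar s)
            from rfl, h5]; exact htM)
    have hq := quot t htIoo
    rw [show ((∫ s, (fun s => -fstar s) s * ((fun s => f s - t * χ s) s - f s) ∂μ) -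
        (∫ s, ((fun s => if 0 < f s then nt else 0) s - fstar s) * f s ∂μ)) /
        (norm1 μ (fun s => (fun s => f s - t * χ s) s - f s) +
          normInf μ (fun s => (fun s => if 0 < f s then nt else 0) s - fstar s))
      = ((∫ s, (-fstar s) * ((f s - t * χ s) - f s) ∂μ) -
        ∫ s, ((if 0 < f s then norm1 μ (fun u => f u - t * χ u) else 0) - fstar s) * f s ∂μ) /
        (norm1 μ (fun s => (f s - t * χ s) - f s) +
          normInf μ (fun s =>
            (if 0 < f s then norm1 μ (fun u => f u - t * χ u) else 0) - fstar s)) from rfl]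
      at this
    rw [hq] at this
    linarith
end

section
/- Let f ∈ L¹(S) with f(s) > 0 a.e., so J(f) is the constant function f* with value ‖f‖₁. If u* ∈ L^∞(S) satisfies u*(s) > f*(s) a.e. (i.e., u* > ‖f‖₁ a.e.), then u* ∉ D̂*J(f, f*)(f**), where f** is the functional k* ↦ ∫ k* f dμ on L^∞. -/
open MeasureTheory
open scoped ENNReal Topology

variable {S : Type*} [MeasurableSpace S]

/-- let `f ∈ L¹(S)` with `f > 0` a.e., so `J(f)` is the constant function
`f* = ‖f‖₁`.  If `u* ∈ L^∞` satisfies `u* > ‖f‖₁` a.e. (and there are `b > 0` and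
`E ⊆ {u* > ‖f‖₁ + b}` with `0 < μ E < ∞`), then `u* ∉ D̂*J(f, f*)(f**)`, where
`f**` is the functional `k* ↦ ∫ k* f dμ` on `L^∞`. -/
theorem ustar_not_mem_coderivative_L1 (μ : Measure S)
    (f : S → ℝ) (hfm : Measurable f) (hfi : Integrable f μ)
    (hfpos : ∀ᵐ s ∂μ, 0 < f s)
    (ustar : S → ℝ) (hu : MemLp ustar ⊤ μ)
    (hgt : ∀ᵐ s ∂μ, norm1 μ f < ustar s)
    (b : ℝ) (hb : 0 < b)
    (E : Set S) (hE : MeasurableSet E) (hEu : E ⊆ {s | norm1 μ f + b < ustar s})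
    (hE0 : 0 < μ E) (hEfin : μ E < ⊤) :
    ¬ memMDL1 μ f (fun _ => norm1 μ f) (fun h => ∫ s, h s * f s ∂μ) ustar := by

  intro h
  -- basic positivity facts
  have hμ0 : μ ≠ 0 := by
    intro h0; rw [h0] at hE0; simp at hE0
  set c : ℝ := (μ E).toReal with hc_def
  have hc : 0 < c := ENNReal.toReal_pos hE0.ne' hEfin.ne
  have hN1f : ∫ s, f s ∂μ = norm1 μ f := by
    refine (integral_congr_ae ?_).symm
    filter_upwards [hfpos] with s hs
    exact abs_of_pos hs
  have hN1f_nonneg : 0 ≤ norm1 μ f := integral_nonneg fun s => abs_nonneg _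
  -- get δ from the hypothesis at ε = b/4
  obtain ⟨δ, hδ, H⟩ := h (b / 4) (by positivity)
  set t : ℝ := δ / (2 * c) with ht_def
  have ht : 0 < t := by positivity
  have htc : t * c = δ / 2 := by
    field_simp [ht_def]
    rw [ht_def]; field_simp
  have htcδ : t * c < δ := by rw [htc]; linarith
  have htc0 : 0 < t * c := by positivity
  -- the perturbation
  set g : S → ℝ := fun s => f s + E.indicator (fun _ => t) s with hg_def
  have hind_int : Integrable (E.indicator (fun _ => t)) μ :=
    (integrable_indicator_iff hE).2 (integrableOn_const hEfin.ne)
  have hgi : Integrable g μ := hfi.add hind_int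
  have hind_nonneg : ∀ s, 0 ≤ E.indicator (fun _ => t) s := fun s =>
    Set.indicator_nonneg (fun _ _ => ht.le) s
  have hgpos : ∀ᵐ s ∂μ, 0 < g s := by
    filter_upwards [hfpos] with s hs
    have := hind_nonneg s
    simp only [hg_def]; linarith
  have hind_int_val : ∫ s, E.indicator (fun _ => t) s ∂μ = t * c := by
    rw [integral_indicator_const t hE, smul_eq_mul, mul_comm]; rfl
  -- difference g - f is the indicator
  have hdiff : (fun s => g s - f s) = E.indicator (fun _ => t) := by
    funext s; simp [hg_def]
  -- norm1 of g
  have hN1g : norm1 μ g = norm1 μ f + t * c := by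
    have h1 : norm1 μ g = ∫ s, g s ∂μ := by
      refine integral_congr_ae ?_
      filter_upwards [hgpos] with s hs
      exact abs_of_pos hs
    rw [h1, integral_add hfi hind_int, hN1f, hind_int_val]
  have hN1g_nonneg : 0 ≤ norm1 μ g := integral_nonneg fun s => abs_nonneg _
  -- gstar
  set gstar : S → ℝ := fun _ => norm1 μ g with hgstar_def
  have hmem : gstar ∈ JsetL1 μ g := by
    refine ⟨memLp_top_const _, ?_, ?_⟩
    · have h1 : norm1 μ g = ∫ s, g s ∂μ := by
        refine integral_congr_ae ?_
        filter_upwards [hgpos] with s hs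
        exact abs_of_pos hs
      simp only [hgstar_def]
      rw [integral_mul_const, ← h1, sq]
    · rw [eLpNorm_exponent_top, eLpNormEssSup_const _ hμ0]
      exact Real.enorm_eq_ofReal hN1g_nonneg
  -- the two smallness conditions
  have hnorm1_diff : norm1 μ (fun s => g s - f s) = t * c := by
    unfold norm1
    rw [hdiff]
    have : ∀ s, |E.indicator (fun _ => t) s| = E.indicator (fun _ => t) s := fun s =>
      abs_of_nonneg (hind_nonneg s)
    simp only [this]
    exact hind_int_val
  have hdiffstar : (fun s => gstar s - norm1 μ f) = fun _ => t * c := by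
    funext s; simp [hgstar_def, hN1g]
  have hnormInf_diff : normInf μ (fun s => gstar s - norm1 μ f) = t * c := by
    unfold normInf
    rw [hdiffstar, eLpNorm_exponent_top, eLpNormEssSup_const _ hμ0]
    rw [Real.enorm_eq_ofReal htc0.le, ENNReal.toReal_ofReal htc0.le]
  -- apply H
  have hkey := H g gstar hmem (by rw [hnorm1_diff]; exact htcδ)
    (by rw [hnormInf_diff]; exact htcδ)
  -- compute the numerator pieces
  haveI : IsFiniteMeasure (μ.restrict E) :=
    ⟨by rw [Measure.restrict_apply_univ]; exact hEfin⟩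
  have huE : IntegrableOn ustar E μ :=
    memLp_one_iff_integrable.1 ((hu.restrict E).mono_exponent le_top)
  have hnum1 : (∫ s, ustar s * (g s - f s) ∂μ) = (∫ s in E, ustar s ∂μ) * t := by
    have heq : (fun s => ustar s * (g s - f s)) = E.indicator (fun s => ustar s * t) := by
      funext s
      rw [congrFun hdiff s]
      by_cases hs : s ∈ E
      · simp [Set.indicator_of_mem hs]
      · simp [Set.indicator_of_notMem hs]
    rw [heq, integral_indicator hE, integral_mul_const]
  have hnum1_ge : (norm1 μ f + b) * c ≤ ∫ s in E, ustar s ∂μ :=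
    by have := setIntegral_ge_of_const_le_real hE hEfin.ne (fun x hx => (hEu hx).le) huE
       exact this
  have hnum2 : (∫ s, (gstar s - norm1 μ f) * f s ∂μ) = t * c * norm1 μ f := by
    have : (fun s => (gstar s - norm1 μ f) * f s) = fun s => (t * c) * f s := by
      funext s
      have := congrFun hdiffstar s
      rw [this]
    rw [this, integral_const_mul, hN1f]
  -- lower bound the quotient
  have hnum_ge : t * c * b ≤
      (∫ s, ustar s * (g s - f s) ∂μ) - (∫ s, (gstar s - norm1 μ f) * f s ∂μ) := by
    rw [hnum1, hnum2]
    have : (norm1 μ f + b) * c * t ≤ (∫ s in E, ustar s ∂μ) * t :=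
      mul_le_mul_of_nonneg_right hnum1_ge ht.le
    nlinarith
  rw [hnorm1_diff, hnormInf_diff] at hkey
  have hden : 0 < t * c + t * c := by linarith
  rw [div_le_iff₀ hden] at hkey
  simp only at hkey
  nlinarith
end

section
/- Let f ∈ C[0,1] with f ≥ 0 and ‖f‖ > 0, let μ ∈ J(f), and let f** ∈ (rca[0,1])* be given by γ ↦ ∫₀¹ f dγ. Then θ* ∉ D̂*J(f, μ)(f**): taking g_t = (1−t)f and γ_t = (1−t)μ ∈ J(g_t), the quotient (−⟨γ_t − μ, f⟩)/(‖g_t − f‖ + ‖γ_t − μ‖) converges to ‖f‖/2 > 0 as t ↓ 0. -/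
open MeasureTheory
open scoped Topology NNReal

/-- The unit interval `[0,1]` as a compact metric measurable space. -/
abbrev I01 := Set.Icc (0 : ℝ) 1

/-- Integration of a function against a signed (regular Borel) measure, via its
Jordan decomposition: `∫ f dν = ∫ f dν⁺ − ∫ f dν⁻`. -/
noncomputable def sInt (ν : SignedMeasure I01) (f : I01 → ℝ) : ℝ :=
  (∫ x, f x ∂ν.toJordanDecomposition.posPart) -
    ∫ x, f x ∂ν.toJordanDecomposition.negPart

/-- The total variation norm of a signed measure on `[0,1]`. -/
noncomputable def tvNorm (ν : SignedMeasure I01) : ℝ :=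
  (ν.totalVariation Set.univ).toReal

/-- The normalized duality mapping `J : C[0,1] ⇉ rca[0,1]`:
`J(f) = {ν : ⟨ν, f⟩ = ‖ν‖‖f‖ = ‖f‖² = ‖ν‖²}`. -/
noncomputable def JsetC (f : C(I01, ℝ)) : Set (SignedMeasure I01) :=
  {ν | sInt ν (fun s => f s) = ‖f‖ ^ 2 ∧ tvNorm ν = ‖f‖}

/-- The maximizing set `M(f) = {t ∈ [0,1] : |f(t)| = ‖f‖}`. -/
def maxSet (f : C(I01, ℝ)) : Set I01 := {t | |f t| = ‖f‖}

/-- `λ ∈ D̂*J(f, μ)(Φ)`: the regular (Fréchet) coderivative condition for the set-valued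
normalized duality mapping `J` on `C[0,1]`, i.e.
`limsup_{(g,γ)→(f,μ), γ∈J(g)} (⟨λ, g−f⟩ − ⟨Φ, γ−μ⟩)/(‖g−f‖ + ‖γ−μ‖) ≤ 0`. -/
noncomputable def memMDC (f : C(I01, ℝ)) (μ : SignedMeasure I01)
    (Φ : SignedMeasure I01 → ℝ) (lam : SignedMeasure I01) : Prop :=
  ∀ ε > (0 : ℝ), ∃ δ > (0 : ℝ), ∀ (g : C(I01, ℝ)) (γ : SignedMeasure I01),
    γ ∈ JsetC g → ‖g - f‖ < δ → tvNorm (γ - μ) < δ →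
    (sInt lam (fun s => g s - f s) - Φ (γ - μ)) / (‖g - f‖ + tvNorm (γ - μ)) ≤ ε

lemma sInt_smul (r : ℝ) (ν : SignedMeasure I01) (f : I01 → ℝ) :
    sInt (r • ν) f = r * sInt ν f := by
  unfold sInt
  rw [SignedMeasure.toJordanDecomposition_smul_real]
  rcases le_or_gt 0 r with h | h
  · rw [JordanDecomposition.real_smul_posPart_nonneg _ _ h,
      JordanDecomposition.real_smul_negPart_nonneg _ _ h,
      integral_smul_nnreal_measure, integral_smul_nnreal_measure, NNReal.smul_def,
      NNReal.smul_def, Real.coe_toNNReal _ h]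
    simp only [smul_eq_mul]; ring
  · rw [JordanDecomposition.real_smul_posPart_neg _ _ h,
      JordanDecomposition.real_smul_negPart_neg _ _ h,
      integral_smul_nnreal_measure, integral_smul_nnreal_measure, NNReal.smul_def,
      NNReal.smul_def, Real.coe_toNNReal _ (by linarith : (0:ℝ) ≤ -r)]
    simp only [smul_eq_mul]; ring

lemma tvNorm_smul (r : ℝ) (ν : SignedMeasure I01) :
    tvNorm (r • ν) = |r| * tvNorm ν := by
  unfold tvNorm
  rw [SignedMeasure.totalVariation, SignedMeasure.totalVariation,
    SignedMeasure.toJordanDecomposition_smul_real]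
  have key : ∀ (c : ℝ≥0) (m₁ m₂ : Measure I01) [IsFiniteMeasure m₁] [IsFiniteMeasure m₂],
      (((c • m₁ + c • m₂ : Measure I01)) Set.univ).toReal
        = (c : ℝ) * ((m₁ + m₂ : Measure I01) Set.univ).toReal := by
    intro c m₁ m₂ _ _
    rw [← smul_add, Measure.smul_apply, ENNReal.smul_def, smul_eq_mul, ENNReal.toReal_mul,
      ENNReal.coe_toReal]
  rcases le_or_gt 0 r with h | h
  · rw [JordanDecomposition.real_smul_posPart_nonneg _ _ h,
      JordanDecomposition.real_smul_negPart_nonneg _ _ h, key, Real.coe_toNNReal _ h,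
      abs_of_nonneg h]
  · rw [JordanDecomposition.real_smul_posPart_neg _ _ h,
      JordanDecomposition.real_smul_negPart_neg _ _ h]
    have : (((-r).toNNReal • ν.toJordanDecomposition.negPart
        + (-r).toNNReal • ν.toJordanDecomposition.posPart : Measure I01) Set.univ).toReal
        = ((-r).toNNReal : ℝ) * ((ν.toJordanDecomposition.negPart
            + ν.toJordanDecomposition.posPart : Measure I01) Set.univ).toReal := key _ _ _
    rw [this, Real.coe_toNNReal _ (by linarith : (0:ℝ) ≤ -r), abs_of_neg h]
    rw [Measure.add_apply, Measure.add_apply, add_comm]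

lemma sInt_zero (f : I01 → ℝ) : sInt 0 f = 0 := by
  unfold sInt
  rw [SignedMeasure.toJordanDecomposition_zero]
  simp

lemma sInt_const_mul (c : ℝ) (ν : SignedMeasure I01) (f : I01 → ℝ) :
    sInt ν (fun s => c * f s) = c * sInt ν f := by
  unfold sInt
  rw [integral_const_mul, integral_const_mul]
  ring

/-- let `f ∈ C[0,1]`, `f ≥ 0`, `‖f‖ > 0`, `μ ∈ J(f)`, and let
`f** : γ ↦ ∫ f dγ` on `rca[0,1]`.  Then `θ* ∉ D̂*J(f, μ)(f**)`: with `g_t = (1−t)f` and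
`γ_t = (1−t)μ ∈ J(g_t)`, the quotient `(−⟨γ_t − μ, f⟩)/(‖g_t − f‖ + ‖γ_t − μ‖)`
converges to `‖f‖/2 > 0` as `t ↓ 0`. -/
theorem zero_not_mem_coderivative_C01 (f : C(I01, ℝ)) (hf : 0 < ‖f‖)
    (hfpos : ∀ s : I01, 0 ≤ f s)
    (μ : SignedMeasure I01) (hμ : μ ∈ JsetC f) :
    Filter.Tendsto
      (fun t : ℝ =>
        (-(sInt ((1 - t) • μ - μ) (fun s => f s))) /
          (‖(1 - t) • f - f‖ + tvNorm ((1 - t) • μ - μ)))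
      (𝓝[>] 0) (𝓝 (‖f‖ / 2)) ∧
    0 < ‖f‖ / 2 ∧
    ¬ memMDC f μ (fun γ => sInt γ (fun s => f s)) 0 := by

  obtain ⟨hμ1, hμ2⟩ := hμ
  have hfne : ‖f‖ ≠ 0 := ne_of_gt hf
  have smulμ : ∀ t : ℝ, (1 - t) • μ - μ = (-t) • μ := by intro t; module
  have smulf : ∀ t : ℝ, (1 - t) • f - f = (-t) • f := by intro t; module
  have num : ∀ t : ℝ, -(sInt ((1 - t) • μ - μ) (fun s => f s)) = t * ‖f‖ ^ 2 := by
    intro t; rw [smulμ, sInt_smul, hμ1]; ring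
  have den1 : ∀ t : ℝ, ‖(1 - t) • f - f‖ = |t| * ‖f‖ := by
    intro t; rw [smulf, norm_smul (-t) f, Real.norm_eq_abs, abs_neg]
  have den2 : ∀ t : ℝ, tvNorm ((1 - t) • μ - μ) = |t| * ‖f‖ := by
    intro t; rw [smulμ, tvNorm_smul, hμ2, abs_neg]
  have key : ∀ t : ℝ, 0 < t →
      (-(sInt ((1 - t) • μ - μ) (fun s => f s))) /
        (‖(1 - t) • f - f‖ + tvNorm ((1 - t) • μ - μ)) = ‖f‖ / 2 := by
    intro t ht
    rw [num, den1, den2, abs_of_pos ht]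
    field_simp
    ring
  refine ⟨?_, by positivity, ?_⟩
  · apply Filter.Tendsto.congr' _ (tendsto_const_nhds : Filter.Tendsto _ _ (𝓝 (‖f‖ / 2)))
    filter_upwards [self_mem_nhdsWithin] with t ht
    exact (key t ht).symm
  · intro h
    obtain ⟨δ, hδ, H⟩ := h (‖f‖ / 4) (by positivity)
    set t : ℝ := min (1/2) (δ / (2 * ‖f‖)) with htdef
    have ht0 : 0 < t := lt_min (by norm_num) (by positivity)
    have ht2 : t ≤ 1/2 := min_le_left _ _
    have htδ : t * ‖f‖ < δ := by
      have : t ≤ δ / (2 * ‖f‖) := min_le_right _ _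
      have h2 : (δ / (2 * ‖f‖)) * ‖f‖ = δ / 2 := by field_simp
      nlinarith
    have h1t : (0:ℝ) < 1 - t := by linarith
    set g : C(I01, ℝ) := (1 - t) • f with hg
    set γ : SignedMeasure I01 := (1 - t) • μ with hγ
    have hgnorm : ‖g‖ = (1 - t) * ‖f‖ := by
      rw [hg, norm_smul (1-t) f, Real.norm_eq_abs, abs_of_pos h1t]
    have hmem : γ ∈ JsetC g := by
      constructor
      · have happ : (fun s => g s) = fun s => (1 - t) * f s := by
          funext s; simp [hg]
        rw [hγ, happ, sInt_smul, sInt_const_mul, hμ1, hgnorm]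
        ring
      · rw [hγ, tvNorm_smul, hμ2, hgnorm, abs_of_pos h1t]
    have hgf : ‖g - f‖ = t * ‖f‖ := by rw [hg, den1, abs_of_pos ht0]
    have hγμ : tvNorm (γ - μ) = t * ‖f‖ := by rw [hγ, den2, abs_of_pos ht0]
    have := H g γ hmem (by rw [hgf]; exact htδ) (by rw [hγμ]; exact htδ)
    have hΦ : sInt (γ - μ) (fun s => f s) = -(t * ‖f‖ ^ 2) := by
      rw [hγ, smulμ, sInt_smul, hμ1]; ring
    have hlam : sInt 0 (fun s => g s - f s) = 0 := sInt_zero _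
    simp only at this
    rw [hlam, hΦ, hgf, hγμ] at this
    have heval : (0 - -(t * ‖f‖ ^ 2)) / (t * ‖f‖ + t * ‖f‖) = ‖f‖ / 2 := by
      field_simp
      ring
    rw [heval] at this
    linarith
end
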